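/- If f : ℝ^d → ℝ is convex and differentiable with L-Lipschitz gradient, and 0 ≤ α ≤ 2/L, then for all y, z ∈ ℝ^d, ‖(y − α∇f(y)) − (z − α∇f(z))‖ ≤ ‖y − z‖; that is, the gradient-descent step with step size at most 2/L is nonexpansive. -/

import Mathlib

open Finset MeasureTheory ProbabilityTheory RealInnerProductSpace

noncomputable section

abbrev Vec (d : ℕ) : Type := EuclideanSpace ℝ (Fin d)

/-- The objective `F(x) = (1/n) ∑ i, f(x; i)`. -/
def avgF {d n : ℕ} (f : Fin n → Vec d → ℝ) : Vec d → ℝ :=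
  fun x => (∑ i, f i x) / n

/-- SGDo iterates with constant step size `α`, flattened over epochs:
`σ j` is the permutation used during epoch `j + 1`, and at total step `t`
(the `t % n`-th step of epoch `t / n + 1`) we take a gradient step on the
component selected by the permutation of the current epoch. -/
def sgdoSeq {d n : ℕ} (hn : 0 < n) (f : Fin n → Vec d → ℝ) (α : ℝ)
    (x0 : Vec d) (σ : ℕ → Equiv.Perm (Fin n)) : ℕ → Vec d
  | 0 => x0
  | t + 1 =>
      sgdoSeq hn f α x0 σ t
        - α • gradient (f (σ (t / n) ⟨t % n, Nat.mod_lt t hn⟩)) (sgdoSeq hn f α x0 σ t)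

/-- `x_i^k`, for epoch `k ≥ 1` and within-epoch index `0 ≤ i ≤ n`. -/
def sgdoIter {d n : ℕ} (hn : 0 < n) (f : Fin n → Vec d → ℝ) (α : ℝ)
    (x0 : Vec d) (σ : ℕ → Equiv.Perm (Fin n)) (k i : ℕ) : Vec d :=
  sgdoSeq hn f α x0 σ ((k - 1) * n + i)

/-- Extend a `K`-tuple of permutations to `ℕ` (junk value beyond `K`). -/
def extendPerm {n K : ℕ} (ω : Fin K → Equiv.Perm (Fin n)) : ℕ → Equiv.Perm (Fin n) :=
  fun j => if h : j < K then ω ⟨j, h⟩ else 1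

/-- Expectation of `g` under the uniform distribution on a finite type. -/
def unifExp {Ω : Type*} [Fintype Ω] (g : Ω → ℝ) : ℝ :=
  (∑ ω, g ω) / (Fintype.card Ω)

instance permMeasurableSpace {n : ℕ} : MeasurableSpace (Equiv.Perm (Fin n)) := ⊤

/-- The uniform probability measure on a finite type. -/
def unifMeasure (Ω : Type*) [MeasurableSpace Ω] [Fintype Ω] [Nonempty Ω] : Measure Ω :=
  (PMF.uniformOfFintype Ω).toMeasure

/-- Wasserstein-1 distance between measures on `ℝ^d`, as an infimum over couplings. -/
def W1dist {d : ℕ} (P Q : Measure (Vec d)) : ℝ :=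
  sInf { c | ∃ μ : Measure (Vec d × Vec d), IsProbabilityMeasure μ ∧
    μ.map Prod.fst = P ∧ μ.map Prod.snd = Q ∧ c = ∫ p, ‖p.1 - p.2‖ ∂μ }

/-- Wasserstein-2 distance between measures on `ℝ^d`, as an infimum over couplings. -/
def W2dist {d : ℕ} (P Q : Measure (Vec d)) : ℝ :=
  sInf { c | ∃ μ : Measure (Vec d × Vec d), IsProbabilityMeasure μ ∧
    μ.map Prod.fst = P ∧ μ.map Prod.snd = Q ∧ c = Real.sqrt (∫ p, ‖p.1 - p.2‖ ^ 2 ∂μ) }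

lemma gsn_line_hasDerivAt {d : ℕ} {f : Vec d → ℝ} (hdiff : Differentiable ℝ f)
    (a v : Vec d) (t : ℝ) :
    HasDerivAt (fun s : ℝ => f (a + s • v)) ⟪gradient f (a + t • v), v⟫ t := by
  have h1 : HasDerivAt (fun s : ℝ => a + s • v) v t := by
    simpa using ((hasDerivAt_id t).smul_const v).const_add a
  have h2 := (hasGradientAt_iff_hasFDerivAt.mp
    (hdiff (a + t • v)).hasGradientAt).comp_hasDerivAt t h1
  convert h2 using 1
  · rfl
  · rfl
  · rfl
  · simp

lemma gsn_first_order {d : ℕ} {f : Vec d → ℝ} (hdiff : Differentiable ℝ f)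
    (hconv : ConvexOn ℝ Set.univ f) (y z : Vec d) :
    f y + ⟪gradient f y, z - y⟫ ≤ f z := by
  set g : ℝ → ℝ := fun t => f (y + t • (z - y)) with hg
  have hgc : ConvexOn ℝ Set.univ g := by
    have := hconv.comp_affineMap (AffineMap.lineMap y z : ℝ →ᵃ[ℝ] Vec d)
    have hpre : (⇑(AffineMap.lineMap y z : ℝ →ᵃ[ℝ] Vec d) ⁻¹' Set.univ) = Set.univ := by simp
    rw [hpre] at this
    have e : g = f ∘ ⇑(AffineMap.lineMap y z : ℝ →ᵃ[ℝ] Vec d) := by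
      funext t
      simp only [Function.comp_apply, AffineMap.lineMap_apply_module, hg]
      congr 1
      module
    rw [e]; exact this
  have hd : HasDerivAt g ⟪gradient f y, z - y⟫ 0 := by
    simpa using gsn_line_hasDerivAt hdiff y (z - y) 0
  have := hgc.le_slope_of_hasDerivAt (Set.mem_univ 0) (Set.mem_univ 1) one_pos hd
  rw [slope_def_field] at this
  simp only [hg] at this
  simp only [zero_smul, add_zero, one_smul, add_sub_cancel] at this
  -- this : ⟪∇f y, z-y⟫ ≤ (f z - f y) / (1 - 0)
  nlinarith [this]

lemma gsn_descent_lemma {d : ℕ} {f : Vec d → ℝ} {L : ℝ} (hdiff : Differentiable ℝ f)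
    (hL : ∀ x y, ‖gradient f x - gradient f y‖ ≤ L * ‖x - y‖) (hL0 : 0 ≤ L)
    (y z : Vec d) :
    f z ≤ f y + ⟪gradient f y, z - y⟫ + L / 2 * ‖z - y‖ ^ 2 := by
  set v := z - y with hv
  have hlip : LipschitzWith L.toNNReal (gradient f) := by
    apply LipschitzWith.of_dist_le_mul
    intro a b
    have := hL a b
    simpa [dist_eq_norm, Real.coe_toNNReal L hL0] using this
  have hcontg : Continuous (gradient f) := hlip.continuous
  have hcont : Continuous fun t : ℝ => ⟪gradient f (y + t • v), v⟫ := by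
    apply Continuous.inner
    · exact hcontg.comp (continuous_const.add (continuous_id.smul continuous_const))
    · exact continuous_const
  have hint : IntervalIntegrable (fun t : ℝ => ⟪gradient f (y + t • v), v⟫)
      MeasureTheory.volume 0 1 := hcont.intervalIntegrable 0 1
  have hftc : ∫ t in (0:ℝ)..1, ⟪gradient f (y + t • v), v⟫ = f z - f y := by
    have := intervalIntegral.integral_eq_sub_of_hasDerivAt
      (f := fun s : ℝ => f (y + s • v))
      (f' := fun t : ℝ => ⟪gradient f (y + t • v), v⟫)
      (fun t _ => gsn_line_hasDerivAt hdiff y v t) hint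
    simpa [hv] using this
  have hrcont : Continuous fun t : ℝ => ⟪gradient f y, v⟫ + L * ‖v‖ ^ 2 * t :=
    continuous_const.add (continuous_const.mul continuous_id)
  have hrint : IntervalIntegrable (fun t : ℝ => ⟪gradient f y, v⟫ + L * ‖v‖ ^ 2 * t)
      MeasureTheory.volume 0 1 := hrcont.intervalIntegrable 0 1
  have hptw : ∀ t ∈ Set.Icc (0:ℝ) 1,
      ⟪gradient f (y + t • v), v⟫ ≤ ⟪gradient f y, v⟫ + L * ‖v‖ ^ 2 * t := by
    intro t ht
    have h1 : ⟪gradient f (y + t • v) - gradient f y, v⟫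
        ≤ ‖gradient f (y + t • v) - gradient f y‖ * ‖v‖ := real_inner_le_norm _ _
    have h2 : ‖gradient f (y + t • v) - gradient f y‖ ≤ L * (t * ‖v‖) := by
      have := hL (y + t • v) y
      simpa [norm_smul, abs_of_nonneg ht.1] using this
    have h3 : ‖gradient f (y + t • v) - gradient f y‖ * ‖v‖ ≤ L * (t * ‖v‖) * ‖v‖ :=
      mul_le_mul_of_nonneg_right h2 (norm_nonneg v)
    have h4 : ⟪gradient f (y + t • v) - gradient f y, v⟫
        = ⟪gradient f (y + t • v), v⟫ - ⟪gradient f y, v⟫ := inner_sub_left _ _ _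
    nlinarith [h1, h3, h4]
  have hmono := intervalIntegral.integral_mono_on zero_le_one hint hrint hptw
  have hval : ∫ t in (0:ℝ)..1, (⟪gradient f y, v⟫ + L * ‖v‖ ^ 2 * t)
      = ⟪gradient f y, v⟫ + L / 2 * ‖v‖ ^ 2 := by
    have hi2 : IntervalIntegrable (fun t : ℝ => L * ‖v‖ ^ 2 * t)
        MeasureTheory.volume 0 1 :=
      (continuous_const.mul continuous_id).intervalIntegrable 0 1
    rw [intervalIntegral.integral_add intervalIntegrable_const hi2,
      intervalIntegral.integral_const_mul, integral_id]
    simp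
    ring
  rw [hftc] at hmono
  rw [hval] at hmono
  linarith

lemma gsn_key_ineq {d : ℕ} {f : Vec d → ℝ} {L : ℝ} (hdiff : Differentiable ℝ f)
    (hconv : ConvexOn ℝ Set.univ f)
    (hL : ∀ x y, ‖gradient f x - gradient f y‖ ≤ L * ‖x - y‖) (hLpos : 0 < L)
    (y z : Vec d) :
    f y + ⟪gradient f y, z - y⟫ + 1 / (2 * L) * ‖gradient f z - gradient f y‖ ^ 2 ≤ f z := by
  set gy := gradient f y
  set gz := gradient f z
  set Δ := gz - gy with hΔ
  set w := z - (1 / L) • Δ with hw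
  have h1 := gsn_first_order hdiff hconv y w
  have h2 := gsn_descent_lemma hdiff hL hLpos.le z w
  have e1 : w - y = (z - y) - (1 / L) • Δ := by rw [hw]; abel
  have e2 : w - z = -((1 / L) • Δ) := by rw [hw]; abel
  have i1 : ⟪gy, w - y⟫ = ⟪gy, z - y⟫ - (1 / L) * ⟪gy, Δ⟫ := by
    rw [e1, inner_sub_right, real_inner_smul_right]
  have i2 : ⟪gz, w - z⟫ = -((1 / L) * ⟪gz, Δ⟫) := by
    rw [e2, inner_neg_right, real_inner_smul_right]
  have i3 : ‖w - z‖ ^ 2 = (1 / L) ^ 2 * ‖Δ‖ ^ 2 := by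
    rw [e2, norm_neg, norm_smul, Real.norm_eq_abs]
    rw [abs_of_nonneg (by positivity : (0:ℝ) ≤ 1 / L)]
    ring
  have i4 : ⟪gz, Δ⟫ - ⟪gy, Δ⟫ = ‖Δ‖ ^ 2 := by
    rw [← inner_sub_left, ← hΔ, real_inner_self_eq_norm_sq]
  rw [i1] at h1
  rw [i2, i3] at h2
  have hL' : L ≠ 0 := hLpos.ne'
  have hfield : L / 2 * ((1 / L) ^ 2 * ‖Δ‖ ^ 2) = 1 / (2 * L) * ‖Δ‖ ^ 2 := by
    field_simp
  have hdiv : (1 / L) * ⟪gz, Δ⟫ - (1 / L) * ⟪gy, Δ⟫ = (1 / L) * ‖Δ‖ ^ 2 := by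
    rw [← mul_sub, i4]
  have hsum : (1/L) * ‖Δ‖^2 - 1/(2*L) * ‖Δ‖^2 = 1/(2*L) * ‖Δ‖^2 := by
    field_simp; ring
  linarith

lemma gsn_cocoercive {d : ℕ} {f : Vec d → ℝ} {L : ℝ} (hdiff : Differentiable ℝ f)
    (hconv : ConvexOn ℝ Set.univ f)
    (hL : ∀ x y, ‖gradient f x - gradient f y‖ ≤ L * ‖x - y‖) (hLpos : 0 < L)
    (y z : Vec d) :
    (1 / L) * ‖gradient f y - gradient f z‖ ^ 2 ≤ ⟪gradient f y - gradient f z, y - z⟫ := by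
  have h1 := gsn_key_ineq hdiff hconv hL hLpos y z
  have h2 := gsn_key_ineq hdiff hconv hL hLpos z y
  have hsymm : ‖gradient f y - gradient f z‖ = ‖gradient f z - gradient f y‖ :=
    norm_sub_rev _ _
  have e1 : ⟪gradient f y - gradient f z, y - z⟫
      = ⟪gradient f y, y - z⟫ - ⟪gradient f z, y - z⟫ := inner_sub_left _ _ _
  have e2 : ⟪gradient f y, z - y⟫ = -⟪gradient f y, y - z⟫ := by
    rw [← inner_neg_right]; congr 1; abel
  have e3 : ⟪gradient f z, y - z⟫ = -⟪gradient f z, z - y⟫ := by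
    rw [← inner_neg_right]; congr 1; abel
  have hn : ‖gradient f y - gradient f z‖ ^ 2 = ‖gradient f z - gradient f y‖ ^ 2 := by
    rw [hsymm]
  have hw : 1 / L * ‖gradient f y - gradient f z‖ ^ 2
      = 1 / (2 * L) * ‖gradient f z - gradient f y‖ ^ 2
        + 1 / (2 * L) * ‖gradient f y - gradient f z‖ ^ 2 := by
    rw [hn]; field_simp; ring
  linarith [h1, h2, e1, e2, e3, hw]


/-- **Nonexpansiveness of a gradient step.** If `f` is convex with `L`-Lipschitz
gradient and `0 ≤ α ≤ 2/L`, the map `x ↦ x − α∇f(x)` is nonexpansive. -/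
theorem gradient_step_nonexpansive
    (d : ℕ) (f : Vec d → ℝ) (L α : ℝ)
    (hdiff : Differentiable ℝ f)
    (hconv : ConvexOn ℝ Set.univ f)
    (hL : ∀ x y, ‖gradient f x - gradient f y‖ ≤ L * ‖x - y‖)
    (hα0 : 0 ≤ α) (hα : α ≤ 2 / L) :
    ∀ y z : Vec d,
      ‖(y - α • gradient f y) - (z - α • gradient f z)‖ ≤ ‖y - z‖ := by
  intro y z
  rcases lt_trichotomy L 0 with hneg | hzero | hpos
  · exfalso
    have : 2 / L < 0 := div_neg_of_pos_of_neg two_pos hneg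
    linarith
  · have hα' : α = 0 := le_antisymm (by simpa [hzero] using hα) hα0
    simp [hα']
  · have hc := gsn_cocoercive hdiff hconv hL hpos y z
    have hrw : (y - α • gradient f y) - (z - α • gradient f z)
        = (y - z) - α • (gradient f y - gradient f z) := by
      rw [smul_sub]; abel
    have hsq : ‖(y - z) - α • (gradient f y - gradient f z)‖ ^ 2 ≤ ‖y - z‖ ^ 2 := by
      rw [norm_sub_sq_real, real_inner_smul_right, norm_smul, Real.norm_eq_abs,
        abs_of_nonneg hα0, mul_pow]
      have hαL : α * L ≤ 2 := by
        rw [le_div_iff₀ hpos] at hα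
        linarith
      set N := ‖gradient f y - gradient f z‖ ^ 2 with hN
      set I := ⟪gradient f y - gradient f z, y - z⟫ with hI
      have hc' : N ≤ L * I := by
        have := mul_le_mul_of_nonneg_left hc hpos.le
        have hLN : L * (1 / L * N) = N := by field_simp
        linarith [this, hLN.le, hLN.ge]
      have hNn : (0:ℝ) ≤ N := sq_nonneg _
      have hIn : (0:ℝ) ≤ I := by nlinarith [hc', hNn, hpos]
      have h5 : α ^ 2 * N ≤ α ^ 2 * (L * I) := mul_le_mul_of_nonneg_left hc' (sq_nonneg α)
      have h6 : α * L * (α * I) ≤ 2 * (α * I) :=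
        mul_le_mul_of_nonneg_right hαL (mul_nonneg hα0 hIn)
      have hcomm : ⟪y - z, gradient f y - gradient f z⟫ = I := by
        rw [hI, real_inner_comm]
      rw [hcomm]
      nlinarith [h5, h6]
    rw [hrw]
    have := Real.sqrt_le_sqrt hsq
    simpa [Real.sqrt_sq (norm_nonneg _)] using this
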